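/- For every integer M ≥ 1 and every p ∈ (0, 2π), the principal value integral ∫₀^{2π} e^{iMq}/(e^{ip} − e^{iq}) dq equals −π e^{i(M−1)p}. -/

import Mathlib

open Real Filter intervalIntegral

lemma exp_I_ne {p q : ℝ} (hne : q ≠ p) (habs : |q - p| < 2*π) :
    Complex.exp (Complex.I*q) ≠ Complex.exp (Complex.I*p) := by
  rw [Ne, Complex.exp_eq_exp_iff_exists_int]
  rintro ⟨n, hn⟩
  have h2 : (Complex.I : ℂ) * q = Complex.I * (p + n * (2*π)) := by
    rw [hn]; push_cast; ring
  have h4 : q = p + n * (2*π) := by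
    have := mul_left_cancel₀ Complex.I_ne_zero h2
    exact_mod_cast this
  rcases eq_or_ne n 0 with h | h
  · simp [h] at h4; exact hne h4
  · have h1 : (1:ℝ) ≤ |(n:ℝ)| := by exact_mod_cast Int.one_le_abs h
    have : (2*π) ≤ |q - p| := by
      rw [h4, show p + n*(2*π) - p = n*(2*π) by ring, abs_mul,
        abs_of_pos Real.two_pi_pos]
      nlinarith [Real.two_pi_pos]
    linarith

lemma denom_eq (p q : ℝ) :
    Complex.exp (Complex.I*p) - Complex.exp (Complex.I*q)
      = Complex.exp (Complex.I*p) * Complex.exp (((q-p)/2 : ℂ)*Complex.I) *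
        (-2*Complex.I*Complex.sin (((q-p)/2 : ℂ))) := by
  have hq : Complex.exp (Complex.I*q)
      = Complex.exp (Complex.I*p) * Complex.exp (((q-p)/2 : ℂ)*Complex.I)^2 := by
    rw [sq, ← Complex.exp_add, ← Complex.exp_add]
    ring_nf
  rw [hq, Complex.exp_mul_I]
  have h1 := Complex.sin_sq_add_cos_sq (((q-p)/2 : ℂ))
  have h2 := Complex.I_sq
  linear_combination (-(Complex.exp (Complex.I*p)))*h1
    + (Complex.exp (Complex.I*p))*(Complex.sin (((q-p)/2 : ℂ)))^2*h2

lemma sin_complex_ne {p q : ℝ} (hs : Real.sin ((q-p)/2) ≠ 0) :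
    Complex.sin (((q-p)/2 : ℂ)) ≠ 0 := by
  have : (((q-p)/2 : ℂ)) = ((((q-p)/2 : ℝ)) : ℂ) := by push_cast; ring
  rw [this, ← Complex.ofReal_sin]
  exact_mod_cast hs

lemma denom_ne {p q : ℝ} (hs : Real.sin ((q-p)/2) ≠ 0) :
    Complex.exp (Complex.I*p) - Complex.exp (Complex.I*q) ≠ 0 := by
  rw [denom_eq]
  exact mul_ne_zero (mul_ne_zero (Complex.exp_ne_zero _) (Complex.exp_ne_zero _))
    (by simpa using sin_complex_ne hs)

lemma hasDeriv_G (p : ℝ) {q : ℝ} (hs : Real.sin ((q-p)/2) ≠ 0) :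
    HasDerivAt (fun x : ℝ => Complex.exp (-(Complex.I*p)) *
        (x/2 + Complex.I * Real.log (Real.sin ((x-p)/2))))
      (1 / (Complex.exp (Complex.I*p) - Complex.exp (Complex.I*q))) q := by
  have hu : HasDerivAt (fun x:ℝ => (x-p)/2) (1/2) q :=
    ((hasDerivAt_id q).sub_const p).div_const 2
  have hsin : HasDerivAt (fun x:ℝ => Real.sin ((x-p)/2)) (Real.cos ((q-p)/2) * (1/2)) q :=
    (Real.hasDerivAt_sin _).comp q hu
  have hlog : HasDerivAt (fun x:ℝ => Real.log (Real.sin ((x-p)/2)))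
      ((Real.sin ((q-p)/2))⁻¹ * (Real.cos ((q-p)/2) * (1/2))) q :=
    (Real.hasDerivAt_log hs).comp q hsin (h₂ := Real.log)
  have hC := hlog.ofReal_comp
  have hx : HasDerivAt (fun x:ℝ => ((x:ℂ))/2) ((1:ℂ)/2) q := by
    simpa using ((hasDerivAt_id q).ofReal_comp).div_const (2:ℂ)
  have htot := ((hx.add (hC.const_mul Complex.I))).const_mul (Complex.exp (-(Complex.I*p)))
  convert htot using 1
  · rfl
  · rfl
  have hs' := sin_complex_ne hs
  have hA : Complex.exp (-(Complex.I*(p:ℂ))) * Complex.exp (Complex.I*p) = 1 := by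
    rw [← Complex.exp_add]; simp
  rw [denom_eq p q, one_div]
  apply inv_eq_of_mul_eq_one_right
  push_cast
  rw [Complex.exp_mul_I]
  field_simp [hs']
  linear_combination (-(Complex.exp (Complex.I*(p:ℂ))*Complex.exp (-(Complex.I*(p:ℂ))))*(Complex.sin (((q:ℂ)-(p:ℂ))/2)^2+Complex.cos (((q:ℂ)-(p:ℂ))/2)^2)
      - Complex.I*Complex.exp (Complex.I*(p:ℂ))*Complex.exp (-(Complex.I*(p:ℂ)))*Complex.cos (((q:ℂ)-(p:ℂ))/2)*Complex.sin (((q:ℂ)-(p:ℂ))/2)) * Complex.I_sq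
    + Complex.exp (Complex.I*(p:ℂ))*Complex.exp (-(Complex.I*(p:ℂ))) * (Complex.sin_sq_add_cos_sq (((q:ℂ)-(p:ℂ))/2))
    + hA

section helpers
lemma sin_ne_left {p ε : ℝ} (hp2 : p < 2*π) (hε : 0 < ε) (hεp : ε ≤ p) :
    ∀ q ∈ Set.uIcc (0:ℝ) (p-ε), Real.sin ((q-p)/2) ≠ 0 := by
  intro q hq
  rw [Set.uIcc_of_le (by linarith)] at hq
  obtain ⟨h0, h1⟩ := hq
  have h2 : -π < (q-p)/2 := by nlinarith [Real.pi_pos]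
  have h3 : (q-p)/2 < 0 := by linarith
  exact (Real.sin_neg_of_neg_of_neg_pi_lt h3 h2).ne

lemma sin_ne_right {p ε : ℝ} (hp1 : 0 < p) (hε : 0 < ε) (hεp : ε ≤ 2*π - p) :
    ∀ q ∈ Set.uIcc (p+ε) (2*π), Real.sin ((q-p)/2) ≠ 0 := by
  intro q hq
  rw [Set.uIcc_of_le (by linarith)] at hq
  obtain ⟨h0, h1⟩ := hq
  have h2 : 0 < (q-p)/2 := by linarith
  have h3 : (q-p)/2 < π := by nlinarith [Real.pi_pos]
  exact (Real.sin_pos_of_pos_of_lt_pi h2 h3).ne'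

lemma integrable_f (p : ℝ) (M : ℤ) (a b : ℝ)
    (h : ∀ q ∈ Set.uIcc a b, Real.sin ((q-p)/2) ≠ 0) :
    IntervalIntegrable (fun q : ℝ => Complex.exp (Complex.I*M*q) /
      (Complex.exp (Complex.I*p) - Complex.exp (Complex.I*q)))
      MeasureTheory.volume a b := by
  apply ContinuousOn.intervalIntegrable
  apply ContinuousOn.div
  · fun_prop
  · fun_prop
  · intro q hq; exact denom_ne (h q hq)

lemma integrable_g (p : ℝ) (a b : ℝ)
    (h : ∀ q ∈ Set.uIcc a b, Real.sin ((q-p)/2) ≠ 0) :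
    IntervalIntegrable (fun q : ℝ => 1 /
      (Complex.exp (Complex.I*p) - Complex.exp (Complex.I*q)))
      MeasureTheory.volume a b := by
  apply ContinuousOn.intervalIntegrable
  apply ContinuousOn.div
  · fun_prop
  · fun_prop
  · intro q hq; exact denom_ne (h q hq)

lemma base_sum {p : ℝ} (hp : p ∈ Set.Ioo 0 (2*π)) {ε : ℝ}
    (hε : ε ∈ Set.Ioo 0 (min p (2*π - p))) :
    (∫ q in (0:ℝ)..(p-ε), 1/(Complex.exp (Complex.I*p) - Complex.exp (Complex.I*q))) +
    (∫ q in (p+ε)..(2*π), 1/(Complex.exp (Complex.I*p) - Complex.exp (Complex.I*q)))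
    = Complex.exp (-(Complex.I*p)) * ((π : ℂ) - (ε : ℂ)) := by
  obtain ⟨hp1, hp2⟩ := hp
  obtain ⟨hε0, hεδ⟩ := hε
  have hεp : ε < p := lt_of_lt_of_le hεδ (min_le_left _ _)
  have hεp' : ε < 2*π - p := lt_of_lt_of_le hεδ (min_le_right _ _)
  have hL := sin_ne_left hp2 hε0 hεp.le
  have hR := sin_ne_right hp1 hε0 hεp'.le
  rw [integral_eq_sub_of_hasDerivAt (fun q hq => hasDeriv_G p (hL q hq))
      (integrable_g p 0 (p-ε) hL),
    integral_eq_sub_of_hasDerivAt (fun q hq => hasDeriv_G p (hR q hq))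
      (integrable_g p (p+ε) (2*π) hR)]
  have e1 : ((p - ε - p)/2) = -(ε/2) := by ring
  have e2 : (((0:ℝ) - p)/2) = -(p/2) := by ring
  have e3 : ((2*π - p)/2) = π - p/2 := by ring
  have e4 : ((p + ε - p)/2) = ε/2 := by ring
  rw [e1, e2, e3, e4, Real.sin_neg, Real.sin_neg, Real.log_neg_eq_log,
    Real.log_neg_eq_log, Real.sin_pi_sub]
  push_cast
  ring
end helpers
lemma f_one (p q : ℝ) (h : Real.sin ((q-p)/2) ≠ 0) :
    Complex.exp (Complex.I*((1:ℤ):ℂ)*q) /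
      (Complex.exp (Complex.I*p) - Complex.exp (Complex.I*q))
    = -1 + Complex.exp (Complex.I*p) *
        (1/(Complex.exp (Complex.I*p) - Complex.exp (Complex.I*q))) := by
  have hD := denom_ne h
  push_cast
  field_simp
  ring

lemma f_succ (M : ℤ) (p q : ℝ) (h : Real.sin ((q-p)/2) ≠ 0) :
    Complex.exp (Complex.I*((M+1:ℤ):ℂ)*q) /
      (Complex.exp (Complex.I*p) - Complex.exp (Complex.I*q))
    = Complex.exp (Complex.I*p) * (Complex.exp (Complex.I*(M:ℂ)*q) /
        (Complex.exp (Complex.I*p) - Complex.exp (Complex.I*q)))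
      - Complex.exp (Complex.I*(M:ℂ)*q) := by
  have hD := denom_ne h
  have he : Complex.exp (Complex.I*((M:ℂ)+1)*q)
      = Complex.exp (Complex.I*(M:ℂ)*q) * Complex.exp (Complex.I*q) := by
    rw [← Complex.exp_add]; ring_nf
  push_cast
  rw [he]
  field_simp
  ring

/-- For integer M ≥ 1 and p ∈ (0, 2π), the principal value integral
∫₀^{2π} e^{iMq}/(e^{ip} − e^{iq}) dq equals −π e^{i(M−1)p}. -/
theorem pv_integral_pos_M (M : ℤ) (hM : 1 ≤ M) (p : ℝ) (hp : p ∈ Set.Ioo 0 (2 * π)) :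
    Tendsto (fun ε : ℝ =>
        (∫ q in (0:ℝ)..(p - ε),
          Complex.exp (Complex.I * M * q) /
            (Complex.exp (Complex.I * p) - Complex.exp (Complex.I * q))) +
        ∫ q in (p + ε)..(2 * π),
          Complex.exp (Complex.I * M * q) /
            (Complex.exp (Complex.I * p) - Complex.exp (Complex.I * q)))
      (nhdsWithin 0 (Set.Ioi 0))
      (nhds (-(π : ℂ) * Complex.exp (Complex.I * (M - 1) * p))) := by
  obtain ⟨hp1, hp2⟩ := hp
  have hδ : 0 < min p (2*π - p) := lt_min hp1 (by linarith)
  have hmem : Set.Ioo (0:ℝ) (min p (2*π-p)) ∈ nhdsWithin (0:ℝ) (Set.Ioi 0) :=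
    Ioo_mem_nhdsGT_of_mem ⟨le_refl 0, hδ⟩
  have main : ∀ N : ℤ, 1 ≤ N → Tendsto (fun ε : ℝ =>
        (∫ q in (0:ℝ)..(p - ε),
          Complex.exp (Complex.I * N * q) /
            (Complex.exp (Complex.I * p) - Complex.exp (Complex.I * q))) +
        ∫ q in (p + ε)..(2 * π),
          Complex.exp (Complex.I * N * q) /
            (Complex.exp (Complex.I * p) - Complex.exp (Complex.I * q)))
      (nhdsWithin 0 (Set.Ioi 0))
      (nhds (-(π : ℂ) * Complex.exp (Complex.I * ((N:ℂ) - 1) * p))) := by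
    intro N
    refine Int.le_induction (motive := fun N _ => Tendsto (fun ε : ℝ =>
        (∫ q in (0:ℝ)..(p - ε),
          Complex.exp (Complex.I * N * q) /
            (Complex.exp (Complex.I * p) - Complex.exp (Complex.I * q))) +
        ∫ q in (p + ε)..(2 * π),
          Complex.exp (Complex.I * N * q) /
            (Complex.exp (Complex.I * p) - Complex.exp (Complex.I * q)))
      (nhdsWithin 0 (Set.Ioi 0))
      (nhds (-(π : ℂ) * Complex.exp (Complex.I * ((N:ℂ) - 1) * p)))) ?_ ?_ N
    · refine Tendsto.congr' ?_ ?_ (f₁ := fun ε : ℝ => -(π:ℂ) + (ε:ℂ))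
      · filter_upwards [hmem] with ε hε
        obtain ⟨hε0, hεδ⟩ := hε
        have hεp : ε < p := lt_of_lt_of_le hεδ (min_le_left _ _)
        have hεp' : ε < 2*π - p := lt_of_lt_of_le hεδ (min_le_right _ _)
        have hL := sin_ne_left hp2 hε0 hεp.le
        have hR := sin_ne_right hp1 hε0 hεp'.le
        have c1 : (∫ q in (0:ℝ)..(p-ε), Complex.exp (Complex.I*((1:ℤ):ℂ)*q) /
              (Complex.exp (Complex.I*p) - Complex.exp (Complex.I*q)))
            = ∫ q in (0:ℝ)..(p-ε), (-1 + Complex.exp (Complex.I*p) *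
                (1/(Complex.exp (Complex.I*p) - Complex.exp (Complex.I*q)))) :=
          integral_congr (fun q hq => f_one p q (hL q hq))
        have c2 : (∫ q in (p+ε)..(2*π), Complex.exp (Complex.I*((1:ℤ):ℂ)*q) /
              (Complex.exp (Complex.I*p) - Complex.exp (Complex.I*q)))
            = ∫ q in (p+ε)..(2*π), (-1 + Complex.exp (Complex.I*p) *
                (1/(Complex.exp (Complex.I*p) - Complex.exp (Complex.I*q)))) :=
          integral_congr (fun q hq => f_one p q (hR q hq))
        rw [c1, c2,
          integral_add intervalIntegrable_const ((integrable_g p 0 (p-ε) hL).const_mul _),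
          integral_add intervalIntegrable_const ((integrable_g p (p+ε) (2*π) hR).const_mul _),
          integral_const_mul, integral_const_mul, integral_const, integral_const]
        have hbs := base_sum ⟨hp1, hp2⟩ ⟨hε0, hεδ⟩
        have hA : Complex.exp (-(Complex.I*(p:ℂ))) * Complex.exp (Complex.I*(p:ℂ)) = 1 := by
          rw [← Complex.exp_add]; simp
        simp only [Complex.real_smul]
        push_cast
        linear_combination (-(Complex.exp (Complex.I*(p:ℂ)))) * hbs - ((π:ℂ) - (ε:ℂ)) * hA
      · have h1 : Tendsto (fun ε : ℝ => -(π:ℂ) + (ε:ℂ)) (nhds 0) (nhds (-(π:ℂ) + ((0:ℝ):ℂ))) :=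
          (continuous_const.add Complex.continuous_ofReal).tendsto 0
        have h2 : Tendsto (fun ε : ℝ => -(π:ℂ) + (ε:ℂ)) (nhdsWithin 0 (Set.Ioi 0)) (nhds (-(π:ℂ) + ((0:ℝ):ℂ))) :=
          h1.mono_left nhdsWithin_le_nhds
        simpa using h2
    · intro M hM ih
      have hM0 : (M:ℂ) ≠ 0 := by
        exact_mod_cast (by omega : (M:ℤ) ≠ 0)
      have hIM : (Complex.I*(M:ℂ)) ≠ 0 := mul_ne_zero Complex.I_ne_zero hM0
      set A := Complex.exp (Complex.I*(p:ℂ)) with hAdef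
      refine Tendsto.congr' ?_ ?_ (f₁ := fun ε : ℝ =>
        A * ((∫ q in (0:ℝ)..(p - ε),
            Complex.exp (Complex.I * (M:ℂ) * q) /
              (Complex.exp (Complex.I * p) - Complex.exp (Complex.I * q))) +
          ∫ q in (p + ε)..(2 * π),
            Complex.exp (Complex.I * (M:ℂ) * q) /
              (Complex.exp (Complex.I * p) - Complex.exp (Complex.I * q)))
        - ((Complex.exp (Complex.I*(M:ℂ) * ((p-ε:ℝ):ℂ)) - Complex.exp (Complex.I*(M:ℂ) * ((0:ℝ):ℂ)))/(Complex.I*(M:ℂ))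
          + (Complex.exp (Complex.I*(M:ℂ) * ((2*π:ℝ):ℂ)) - Complex.exp (Complex.I*(M:ℂ) * ((p+ε:ℝ):ℂ)))/(Complex.I*(M:ℂ))))
      · filter_upwards [hmem] with ε hε
        obtain ⟨hε0, hεδ⟩ := hε
        have hεp : ε < p := lt_of_lt_of_le hεδ (min_le_left _ _)
        have hεp' : ε < 2*π - p := lt_of_lt_of_le hεδ (min_le_right _ _)
        have hL := sin_ne_left hp2 hε0 hεp.le
        have hR := sin_ne_right hp1 hε0 hεp'.le
        have c1 : (∫ q in (0:ℝ)..(p-ε), Complex.exp (Complex.I*((M+1:ℤ):ℂ)*q) /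
              (Complex.exp (Complex.I*p) - Complex.exp (Complex.I*q)))
            = ∫ q in (0:ℝ)..(p-ε), (A * (Complex.exp (Complex.I*(M:ℂ)*q) /
                (Complex.exp (Complex.I*p) - Complex.exp (Complex.I*q)))
              - Complex.exp (Complex.I*(M:ℂ)*q)) :=
          integral_congr (fun q hq => f_succ M p q (hL q hq))
        have c2 : (∫ q in (p+ε)..(2*π), Complex.exp (Complex.I*((M+1:ℤ):ℂ)*q) /
              (Complex.exp (Complex.I*p) - Complex.exp (Complex.I*q)))
            = ∫ q in (p+ε)..(2*π), (A * (Complex.exp (Complex.I*(M:ℂ)*q) /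
                (Complex.exp (Complex.I*p) - Complex.exp (Complex.I*q)))
              - Complex.exp (Complex.I*(M:ℂ)*q)) :=
          integral_congr (fun q hq => f_succ M p q (hR q hq))
        have hexpInt : ∀ a b : ℝ, IntervalIntegrable
            (fun q : ℝ => Complex.exp (Complex.I*(M:ℂ)*q)) MeasureTheory.volume a b := by
          intro a b
          apply Continuous.intervalIntegrable
          fun_prop
        rw [c1, c2,
          integral_sub ((integrable_f p M 0 (p-ε) hL).const_mul _) (hexpInt _ _),
          integral_sub ((integrable_f p M (p+ε) (2*π) hR).const_mul _) (hexpInt _ _),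
          integral_const_mul, integral_const_mul,
          integral_exp_mul_complex hIM, integral_exp_mul_complex hIM]
        ring
      · have hc : Continuous (fun ε : ℝ =>
            (Complex.exp (Complex.I*(M:ℂ) * ((p-ε:ℝ):ℂ)) - Complex.exp (Complex.I*(M:ℂ) * ((0:ℝ):ℂ)))/(Complex.I*(M:ℂ))
            + (Complex.exp (Complex.I*(M:ℂ) * ((2*π:ℝ):ℂ)) - Complex.exp (Complex.I*(M:ℂ) * ((p+ε:ℝ):ℂ)))/(Complex.I*(M:ℂ))) := by
          fun_prop
        have h2π : Complex.exp (Complex.I*(M:ℂ) * ((2*π:ℝ):ℂ)) = 1 := by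
          rw [show Complex.I*(M:ℂ) * ((2*π:ℝ):ℂ) = (M:ℂ)*(2*(π:ℝ)*Complex.I) by push_cast; ring]
          exact Complex.exp_int_mul_two_pi_mul_I M
        have hT2 : Tendsto (fun ε : ℝ =>
            (Complex.exp (Complex.I*(M:ℂ) * ((p-ε:ℝ):ℂ)) - Complex.exp (Complex.I*(M:ℂ) * ((0:ℝ):ℂ)))/(Complex.I*(M:ℂ))
            + (Complex.exp (Complex.I*(M:ℂ) * ((2*π:ℝ):ℂ)) - Complex.exp (Complex.I*(M:ℂ) * ((p+ε:ℝ):ℂ)))/(Complex.I*(M:ℂ)))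
            (nhds (0:ℝ)) (nhds (0:ℂ)) := by
          have := hc.tendsto 0
          convert this using 2
          rw [h2π]
          push_cast
          simp only [mul_zero, Complex.exp_zero, sub_zero, add_zero]
          ring
        have tend := (ih.const_mul A).sub (hT2.mono_left nhdsWithin_le_nhds)
        have final : A * (-(π:ℂ) * Complex.exp (Complex.I*((M:ℂ)-1)*p)) - 0
            = -(π:ℂ) * Complex.exp (Complex.I*(((M+1:ℤ):ℂ)-1)*p) := by
          push_cast
          rw [sub_zero, show Complex.I*((M:ℂ)+1-1)*(p:ℂ) = Complex.I*(p:ℂ) + Complex.I*((M:ℂ)-1)*(p:ℂ) by ring,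
            Complex.exp_add]
          ring
        rw [final] at tend
        exact tend

  exact main M hM
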